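/- arXiv:2004.02831 — 5 statements merged into one kernel-verified Lean document; each statement's English description precedes it below -/
import Mathlib

section
/- The function (a,b) ↦ Λ(a,b) on (0,∞)² is concave. -/
open Real

-- exp-form integrand
lemma geom_eq {a b : ℝ} (ha : 0 < a) (hb : 0 < b) (t : ℝ) :
    a ^ t * b ^ (1 - t) = b * Real.exp ((Real.log a - Real.log b) * t) := by
  rw [Real.rpow_def_of_pos ha, Real.rpow_def_of_pos hb, ← Real.exp_add]
  nth_rewrite 2 [← Real.exp_log hb]
  rw [← Real.exp_add]
  congr 1
  ring

lemma cont_geom {a b : ℝ} (ha : 0 < a) (hb : 0 < b) :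
    Continuous (fun t : ℝ => a ^ t * b ^ (1 - t)) := by
  have : (fun t : ℝ => a ^ t * b ^ (1 - t)) =
      fun t => b * Real.exp ((Real.log a - Real.log b) * t) := by
    funext t; exact geom_eq ha hb t
  rw [this]
  exact continuous_const.mul (Real.continuous_exp.comp (continuous_const.mul continuous_id))

noncomputable def logMean (a b : ℝ) : ℝ :=
  if a = b then a else (a - b) / (Real.log a - Real.log b)

lemma logMean_eq_integral {a b : ℝ} (ha : 0 < a) (hb : 0 < b) :
    logMean a b = ∫ t in (0:ℝ)..1, a ^ t * b ^ (1 - t) := by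
  have hrw : ∀ t : ℝ, a ^ t * b ^ (1 - t) = b * Real.exp ((Real.log a - Real.log b) * t) :=
    geom_eq ha hb
  simp only [hrw]
  set c := Real.log a - Real.log b with hc
  by_cases hab : a = b
  · subst hab
    simp [logMean, hc]
  · have hcne : c ≠ 0 := by
      rw [hc, sub_ne_zero]
      exact fun h => hab (Real.log_injOn_pos (Set.mem_Ioi.mpr ha) (Set.mem_Ioi.mpr hb) h)
    rw [intervalIntegral.integral_const_mul, intervalIntegral.integral_comp_mul_left _ hcne]
    rw [mul_zero, mul_one, integral_exp, smul_eq_mul]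
    rw [hc, Real.exp_sub, Real.exp_log ha, Real.exp_log hb, Real.exp_zero]
    rw [logMean, if_neg hab]
    field_simp

theorem logMean_concave :
    ConcaveOn ℝ (Set.Ioi (0:ℝ) ×ˢ Set.Ioi (0:ℝ)) (fun p : ℝ × ℝ => logMean p.1 p.2) := by
  constructor
  · exact (convex_Ioi 0).prod (convex_Ioi 0)
  rintro ⟨a₁, b₁⟩ ⟨ha₁, hb₁⟩ ⟨a₂, b₂⟩ ⟨ha₂, hb₂⟩ l m hl hm hlm
  simp only [Set.mem_Ioi] at ha₁ hb₁ ha₂ hb₂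
  simp only [Prod.smul_mk, Prod.mk_add_mk, smul_eq_mul]
  have hA : 0 < l * a₁ + m * a₂ := by
    rcases eq_or_lt_of_le hl with h | h
    · rw [← h] at hlm ⊢; simp at hlm; simpa [hlm] using ha₂
    · have := mul_nonneg hm ha₂.le
      nlinarith
  have hB : 0 < l * b₁ + m * b₂ := by
    rcases eq_or_lt_of_le hl with h | h
    · rw [← h] at hlm ⊢; simp at hlm; simpa [hlm] using hb₂
    · have := mul_nonneg hm hb₂.le
      nlinarith
  rw [logMean_eq_integral ha₁ hb₁, logMean_eq_integral ha₂ hb₂,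
    logMean_eq_integral hA hB]
  rw [← intervalIntegral.integral_const_mul, ← intervalIntegral.integral_const_mul,
    ← intervalIntegral.integral_add (f := fun x => l * (a₁ ^ x * b₁ ^ (1 - x)))
      (g := fun x => m * (a₂ ^ x * b₂ ^ (1 - x)))
      ((continuous_const.mul (cont_geom ha₁ hb₁)).intervalIntegrable 0 1)
      ((continuous_const.mul (cont_geom ha₂ hb₂)).intervalIntegrable 0 1)]
  apply intervalIntegral.integral_mono_on zero_le_one
    (((continuous_const.mul (cont_geom ha₁ hb₁)).add (continuous_const.mul (cont_geom ha₂ hb₂))).intervalIntegrable 0 1)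
    ((cont_geom hA hB).intervalIntegrable 0 1)
  intro t ht
  obtain ⟨ht0, ht1⟩ := ht
  set A := l * a₁ + m * a₂
  set B := l * b₁ + m * b₂
  have key : ∀ x y : ℝ, 0 < x → 0 < y →
      x ^ t * y ^ (1 - t) ≤ A ^ t * B ^ (1 - t) * (t * (x / A) + (1 - t) * (y / B)) := by
    intro x y hx hy
    have h := Real.geom_mean_le_arith_mean2_weighted ht0 (by linarith : (0:ℝ) ≤ 1 - t)
      (div_nonneg hx.le hA.le) (div_nonneg hy.le hB.le) (by ring)
    calc x ^ t * y ^ (1 - t)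
        = A ^ t * B ^ (1 - t) * ((x / A) ^ t * (y / B) ^ (1 - t)) := by
          rw [Real.div_rpow hx.le hA.le, Real.div_rpow hy.le hB.le, div_mul_div_comm,
            mul_div_cancel₀ _ (by positivity : A ^ t * B ^ (1 - t) ≠ 0)]
      _ ≤ A ^ t * B ^ (1 - t) * (t * (x / A) + (1 - t) * (y / B)) := by
          apply mul_le_mul_of_nonneg_left h
          positivity
  have h1 := key a₁ b₁ ha₁ hb₁
  have h2 := key a₂ b₂ ha₂ hb₂
  have sum1 : l * (t * (a₁ / A) + (1 - t) * (b₁ / B)) + m * (t * (a₂ / A) + (1 - t) * (b₂ / B))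
      = 1 := by
    field_simp
    ring
  calc l * (a₁ ^ t * b₁ ^ (1 - t)) + m * (a₂ ^ t * b₂ ^ (1 - t))
      ≤ l * (A ^ t * B ^ (1 - t) * (t * (a₁ / A) + (1 - t) * (b₁ / B)))
        + m * (A ^ t * B ^ (1 - t) * (t * (a₂ / A) + (1 - t) * (b₂ / B))) := by
        gcongr
    _ = A ^ t * B ^ (1 - t) *
        (l * (t * (a₁ / A) + (1 - t) * (b₁ / B)) + m * (t * (a₂ / A) + (1 - t) * (b₂ / B))) := by
        ring
    _ = A ^ t * B ^ (1 - t) := by rw [sum1, mul_one]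
end

section
/- For all a, b > 0 and all ω ∈ ℝ, G(a,b) := (a−b)(log a − log b) satisfies G(a,b) ≥ g(ω)·a + g(−ω)·b where g(ω) := 1 − e^{−ω} + ω; moreover equality holds when ω = log(a/b). -/
open Real

noncomputable def G (a b : ℝ) : ℝ := (a - b) * (Real.log a - Real.log b)

noncomputable def g (ω : ℝ) : ℝ := 1 - Real.exp (-ω) + ω

theorem G_affine_lower_bound (a b : ℝ) (ha : 0 < a) (hb : 0 < b) :
    (∀ ω : ℝ, G a b ≥ g ω * a + g (-ω) * b) ∧
    G a b = g (Real.log (a / b)) * a + g (-(Real.log (a / b))) * b := by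
  have main : ∀ ω : ℝ, G a b ≥ g ω * a + g (-ω) * b := by
    intro ω
    set t := Real.log a - Real.log b - ω with ht
    have e1 : b * Real.exp t = a * Real.exp (-ω) := by
      rw [ht, show Real.log a - Real.log b - ω = (Real.log a - Real.log b) + -ω by ring,
        Real.exp_add, Real.exp_sub, Real.exp_log ha, Real.exp_log hb]
      field_simp
    have e2 : a * Real.exp (-t) = b * Real.exp ω := by
      rw [ht, show -(Real.log a - Real.log b - ω) = (Real.log b - Real.log a) + ω by ring,
        Real.exp_add, Real.exp_sub, Real.exp_log hb, Real.exp_log ha]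
      field_simp
    have p1 : b * (Real.exp t - 1 - t) ≥ 0 := by nlinarith [Real.add_one_le_exp t]
    have p2 : a * (Real.exp (-t) - 1 + t) ≥ 0 := by nlinarith [Real.add_one_le_exp (-t)]
    have hω : Real.log a - Real.log b = t + ω := by rw [ht]; ring
    have key : G a b - (g ω * a + g (-ω) * b)
        = b * (Real.exp t - 1 - t) + a * (Real.exp (-t) - 1 + t) := by
      simp only [G, g, hω, neg_neg]
      linear_combination -e1 - e2
    linarith [p1, p2, key]
  refine ⟨main, ?_⟩
  have hlog : Real.log (a / b) = Real.log a - Real.log b := Real.log_div ha.ne' hb.ne'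
  have e1 : Real.exp (-(Real.log a - Real.log b)) * a = b := by
    rw [show -(Real.log a - Real.log b) = Real.log b - Real.log a by ring,
      Real.exp_sub, Real.exp_log hb, Real.exp_log ha]
    field_simp
  have e2 : Real.exp (Real.log a - Real.log b) * b = a := by
    rw [Real.exp_sub, Real.exp_log ha, Real.exp_log hb]
    field_simp
  simp only [G, g, hlog, neg_neg]
  linear_combination e1 + e2
end

section
/- Suppose a reaction-rate equation with reactions (αʳ, βʳ) and rates k_fw^r, k_bw^r > 0 satisfies detailed balance at c* ∈ (0,∞)^I, i.e. κ*^r := k_fw^r (c*)^{αʳ} = k_bw^r (c*)^{βʳ} for all r. Then with E(c) = Σᵢ cᵢ* λ_B(cᵢ/cᵢ*) and Onsager matrix 𝕂(c) = Σ_r κ*^r Λ(c^{αʳ}/(c*)^{αʳ}, c^{βʳ}/(c*)^{βʳ}) (αʳ−βʳ)⊗(αʳ−βʳ), one has 𝕂(c)·DE(c) = R(c) := Σ_r (k_fw^r c^{αʳ} − k_bw^r c^{βʳ})(αʳ − βʳ) for every c ∈ (0,∞)^I. -/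
open Real Finset

/-- the monomial `c^α = ∏ i, c i ^ α i` -/
def mono {I : ℕ} (c : Fin I → ℝ) (α : Fin I → ℕ) : ℝ := ∏ i, c i ^ α i

lemma mono_pos {I : ℕ} {c : Fin I → ℝ} (hc : ∀ i, 0 < c i) (α : Fin I → ℕ) :
    0 < mono c α :=
  Finset.prod_pos fun i _ => pow_pos (hc i) _

lemma log_mono_div {I : ℕ} {c cstar : Fin I → ℝ} (hc : ∀ i, 0 < c i)
    (hcstar : ∀ i, 0 < cstar i) (α : Fin I → ℕ) :
    Real.log (mono c α / mono cstar α) = ∑ j, (α j : ℝ) * Real.log (c j / cstar j) := by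
  have : mono c α / mono cstar α = ∏ j, (c j / cstar j) ^ α j := by
    simp [mono, div_pow, Finset.prod_div_distrib]
  rw [this, Real.log_prod]
  · simp [Real.log_pow]
  · intro j _
    exact (pow_pos (div_pos (hc j) (hcstar j)) _).ne'

lemma logMean_mul_sub_log {a b : ℝ} (ha : 0 < a) (hb : 0 < b) :
    logMean a b * (Real.log a - Real.log b) = a - b := by
  unfold logMean
  by_cases h : a = b
  · simp [h]
  · rw [if_neg h, div_mul_cancel₀]
    intro hlog
    exact h (Real.log_injOn_pos.eq_iff (Set.mem_Ioi.mpr ha) (Set.mem_Ioi.mpr hb) |>.mp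
      (by linarith))

theorem rre_gradient_structure (I R : ℕ) (α β : Fin R → Fin I → ℕ)
    (kfw kbw : Fin R → ℝ) (hkfw : ∀ r, 0 < kfw r) (hkbw : ∀ r, 0 < kbw r)
    (cstar : Fin I → ℝ) (hcstar : ∀ i, 0 < cstar i)
    (κ : Fin R → ℝ)
    (hDB : ∀ r, κ r = kfw r * mono cstar (α r) ∧ κ r = kbw r * mono cstar (β r)) :
    ∀ c : Fin I → ℝ, (∀ i, 0 < c i) → ∀ i : Fin I,
      (∑ r, κ r * logMean (mono c (α r) / mono cstar (α r)) (mono c (β r) / mono cstar (β r))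
          * (∑ j, ((α r j : ℝ) - (β r j : ℝ)) * Real.log (c j / cstar j))
          * ((α r i : ℝ) - (β r i : ℝ)))
      = ∑ r, (kfw r * mono c (α r) - kbw r * mono c (β r)) * ((α r i : ℝ) - (β r i : ℝ)) := by
  intro c hc i
  apply Finset.sum_congr rfl
  intro r _
  congr 1
  set a := mono c (α r) / mono cstar (α r) with ha_def
  set b := mono c (β r) / mono cstar (β r) with hb_def
  have ha : 0 < a := div_pos (mono_pos hc _) (mono_pos hcstar _)
  have hb : 0 < b := div_pos (mono_pos hc _) (mono_pos hcstar _)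
  have hlog : (∑ j, ((α r j : ℝ) - (β r j : ℝ)) * Real.log (c j / cstar j))
      = Real.log a - Real.log b := by
    rw [ha_def, hb_def, log_mono_div hc hcstar, log_mono_div hc hcstar,
      ← Finset.sum_sub_distrib]
    congr 1; ext j; ring
  obtain ⟨h1, h2⟩ := hDB r
  have hka : κ r * a = kfw r * mono c (α r) := by
    rw [h1, ha_def]; field_simp [(mono_pos hcstar _).ne']
  have hkb : κ r * b = kbw r * mono c (β r) := by
    rw [h2, hb_def]; field_simp [(mono_pos hcstar _).ne']
  rw [hlog, mul_assoc, logMean_mul_sub_log ha hb, mul_sub, hka, hkb]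
end

section
/- Assume the detailed-balance condition κ*^r = k_fw^r (c*)^{αʳ} = k_bw^r (c*)^{βʳ} for all r. Then the Poisson product distribution w_n^V = ∏ᵢ e^{−V cᵢ*}(V cᵢ*)^{nᵢ}/nᵢ! satisfies, for every reaction r and every n ∈ ℕ₀^I, k_fw^r 𝔹_V^{αʳ}(n) w_{n+αʳ}^V = k_bw^r 𝔹_V^{βʳ}(n) w_{n+βʳ}^V = κ*^r V w_n^V. -/
open Real Finset

theorem cme_detailed_balance (I R : ℕ) (α β : Fin R → Fin I → ℕ)
    (kfw kbw : Fin R → ℝ) (hkfw : ∀ r, 0 < kfw r) (hkbw : ∀ r, 0 < kbw r)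
    (cstar : Fin I → ℝ) (hcstar : ∀ i, 0 < cstar i)
    (κ : Fin R → ℝ)
    (hDB : ∀ r, κ r = kfw r * ∏ i, cstar i ^ α r i ∧ κ r = kbw r * ∏ i, cstar i ^ β r i)
    (V : ℝ) (hV : 0 < V)
    (w : (Fin I → ℕ) → ℝ)
    (hw : ∀ n, w n = ∏ i, Real.exp (-(V * cstar i)) * (V * cstar i) ^ (n i) / (Nat.factorial (n i)))
    (B : (Fin I → ℕ) → (Fin I → ℕ) → ℝ)
    (hB : ∀ γ n, B γ n = V * (∏ i, ((Nat.factorial (n i + γ i)) : ℝ)) / (V ^ (∑ i, γ i) * ∏ i, ((Nat.factorial (n i)) : ℝ))) :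
    ∀ r : Fin R, ∀ n : Fin I → ℕ,
      kfw r * B (α r) n * w (fun i => n i + α r i)
        = kbw r * B (β r) n * w (fun i => n i + β r i) ∧
      kfw r * B (α r) n * w (fun i => n i + α r i) = κ r * V * w n := by
  have key : ∀ γ : Fin I → ℕ, ∀ n : Fin I → ℕ,
      B γ n * w (fun i => n i + γ i) = V * (∏ i, cstar i ^ γ i) * w n := by
    intro γ n
    rw [hB, hw, hw]
    have hP0 : (∏ i, ((Nat.factorial (n i)) : ℝ)) ≠ 0 :=
      Finset.prod_ne_zero_iff.2 fun i _ => Nat.cast_ne_zero.2 (Nat.factorial_ne_zero _)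
    have hP1 : (∏ i, ((Nat.factorial (n i + γ i)) : ℝ)) ≠ 0 :=
      Finset.prod_ne_zero_iff.2 fun i _ => Nat.cast_ne_zero.2 (Nat.factorial_ne_zero _)
    have hfac : ∀ i : Fin I, ((Nat.factorial (n i + γ i)) : ℝ) ≠ 0 :=
      fun i => Nat.cast_ne_zero.2 (Nat.factorial_ne_zero _)
    have hfac0 : ∀ i : Fin I, ((Nat.factorial (n i)) : ℝ) ≠ 0 :=
      fun i => Nat.cast_ne_zero.2 (Nat.factorial_ne_zero _)
    have hVS : V ^ (∑ i, γ i) ≠ 0 := pow_ne_zero _ hV.ne'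
    have h1 : (∏ i, Real.exp (-(V * cstar i)) * (V * cstar i) ^ (n i + γ i) / (Nat.factorial (n i + γ i) : ℝ))
        = (∏ i, Real.exp (-(V * cstar i)) * (V * cstar i) ^ (n i + γ i)) / ∏ i, ((Nat.factorial (n i + γ i)) : ℝ) :=
      Finset.prod_div_distrib _ _
    have h0 : (∏ i, Real.exp (-(V * cstar i)) * (V * cstar i) ^ (n i) / (Nat.factorial (n i) : ℝ))
        = (∏ i, Real.exp (-(V * cstar i)) * (V * cstar i) ^ (n i)) / ∏ i, ((Nat.factorial (n i)) : ℝ) :=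
      Finset.prod_div_distrib _ _
    rw [h1, h0]
    have h2 : (∏ i, Real.exp (-(V * cstar i)) * (V * cstar i) ^ (n i + γ i))
        = (∏ i, Real.exp (-(V * cstar i)) * (V * cstar i) ^ (n i)) * (V ^ (∑ i, γ i) * ∏ i, cstar i ^ γ i) := by
      rw [← Finset.prod_pow_eq_pow_sum, ← Finset.prod_mul_distrib, ← Finset.prod_mul_distrib]
      apply Finset.prod_congr rfl
      intro i _
      rw [pow_add, mul_pow]
      ring
    rw [h2]
    field_simp
  intro r n
  have hα := key (α r) n
  have hβ := key (β r) n
  have hfwd : kfw r * B (α r) n * w (fun i => n i + α r i) = κ r * V * w n := by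
    rw [mul_assoc, hα, (hDB r).1]; ring
  have hbwd : kbw r * B (β r) n * w (fun i => n i + β r i) = κ r * V * w n := by
    rw [mul_assoc, hβ, (hDB r).2]; ring
  exact ⟨hfwd.trans hbwd.symm, hfwd⟩
end

section
/- Let c* > 0 and E(c) = c* λ_B(c/c*). For all c ≥ 0 and all n ∈ ℕ₀ with n/V ≤ c ≤ (n+1)/V one has E(c) − E(n/V) ≤ (max{1, 1/c*}/V)(1 + E(c)), and if V ≥ max{1/c*, e c*} and V ≥ e then E(n/V) − E(c) ≤ 2 (log V)/V. -/
open Real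

noncomputable def lamB (z : ℝ) : ℝ := z * Real.log z - z + 1

noncomputable def E (cstar c : ℝ) : ℝ := cstar * lamB (c / cstar)

lemma E_eq (cstar : ℝ) (h : cstar ≠ 0) (c : ℝ) :
    E cstar c = c * Real.log c - c * Real.log cstar - c + cstar := by
  unfold E lamB
  rcases eq_or_ne c 0 with rfl | hc
  · simp
  · rw [Real.log_div hc h]; field_simp

lemma lamB_nonneg (z : ℝ) (hz : 0 ≤ z) : 0 ≤ lamB z := by
  unfold lamB
  rcases eq_or_lt_of_le hz with rfl | hz'
  · simp
  · have h := Real.log_le_sub_one_of_pos (show (0:ℝ) < z⁻¹ by positivity)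
    rw [Real.log_inv] at h
    have h2 : 1 - 1/z ≤ Real.log z := by
      rw [one_div]; linarith
    have hz1 : z * (1/z) = 1 := by field_simp
    nlinarith [mul_le_mul_of_nonneg_left h2 hz'.le, hz1]

lemma E_nonneg (cstar c : ℝ) (hcs : 0 < cstar) (hc : 0 ≤ c) : 0 ≤ E cstar c := by
  unfold E
  exact mul_nonneg hcs.le (lamB_nonneg _ (by positivity))

lemma step1 (cstar : ℝ) (hcs : 0 < cstar) (a c : ℝ) (ha : 0 ≤ a) (hac : a ≤ c) :
    E cstar c - E cstar a ≤ (c - a) * (Real.log c - Real.log cstar) := by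
  rw [E_eq cstar hcs.ne' c, E_eq cstar hcs.ne' a]
  rcases eq_or_lt_of_le ha with rfl | ha'
  · simp only [Real.log_zero, mul_zero, zero_mul, sub_zero, zero_sub]
    nlinarith
  · have hc' : 0 < c := lt_of_lt_of_le ha' hac
    have h := Real.log_le_sub_one_of_pos (show (0:ℝ) < c/a by positivity)
    rw [Real.log_div hc'.ne' ha'.ne'] at h
    have h2 := mul_le_mul_of_nonneg_left h ha'.le
    have haa : a * (c/a) = c := by field_simp
    nlinarith

lemma step1' (cstar : ℝ) (hcs : 0 < cstar) (a c : ℝ) (ha : 0 < a) (hac : a ≤ c) :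
    E cstar a - E cstar c ≤ (c - a) * (Real.log cstar - Real.log a) := by
  rw [E_eq cstar hcs.ne' c, E_eq cstar hcs.ne' a]
  have hc' : 0 < c := lt_of_lt_of_le ha hac
  have h := Real.log_le_sub_one_of_pos (show (0:ℝ) < a/c by positivity)
  rw [Real.log_div ha.ne' hc'.ne'] at h
  have h2 := mul_le_mul_of_nonneg_left h hc'.le
  have haa : c * (a/c) = a := by field_simp
  nlinarith

lemma claim1 (cstar : ℝ) (hcs : 0 < cstar) (c : ℝ) (hc : 0 < c)
    (hx : 0 ≤ Real.log c - Real.log cstar) :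
    Real.log c - Real.log cstar ≤ max 1 (1/cstar) * (1 + E cstar c) := by
  set x := Real.log c - Real.log cstar with hxdef
  have hcx : c / cstar = Real.exp x := by
    rw [hxdef, ← Real.log_div hc.ne' hcs.ne', Real.exp_log (by positivity)]
  have hE : E cstar c = cstar * (Real.exp x * x - Real.exp x + 1) := by
    unfold E lamB; rw [hcx, Real.log_exp]
  set M := max 1 (1/cstar) with hMdef
  have hM1 : (1:ℝ) ≤ M := le_max_left _ _
  have hMc : 1 ≤ M * cstar := by
    have h1 : 1/cstar ≤ M := le_max_right _ _
    have : (1/cstar) * cstar ≤ M * cstar := mul_le_mul_of_nonneg_right h1 hcs.le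
    rwa [one_div, inv_mul_cancel₀ hcs.ne'] at this
  have hlam : 0 ≤ Real.exp x * x - Real.exp x + 1 := by
    have h := lamB_nonneg (Real.exp x) (Real.exp_pos x).le
    unfold lamB at h
    rwa [Real.log_exp] at h
  rw [hE]
  rcases le_or_gt x 1 with h1 | h1
  · nlinarith [mul_nonneg (mul_nonneg (le_trans zero_le_one hM1) hcs.le) hlam]
  · have hexp := Real.add_one_le_exp x
    nlinarith [mul_nonneg (by linarith : (0:ℝ) ≤ x - 1) (by linarith : (0:ℝ) ≤ Real.exp x - (x+1)),
      mul_nonneg (by linarith : (0:ℝ) ≤ M * cstar - 1) hlam]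

lemma te_mono (s t : ℝ) (hs : 1 ≤ s) (hst : s ≤ t) :
    t * Real.exp (-t) ≤ s * Real.exp (-s) := by
  have h1 : t - s + 1 ≤ Real.exp (t - s) := Real.add_one_le_exp (t - s)
  have h2 : Real.exp t = Real.exp s * Real.exp (t - s) := by
    rw [← Real.exp_add]; ring_nf
  have hes : (0:ℝ) < Real.exp s := Real.exp_pos s
  have het : (0:ℝ) < Real.exp t := Real.exp_pos t
  have key : t * Real.exp s ≤ s * Real.exp t := by
    rw [h2]
    nlinarith [mul_le_mul_of_nonneg_left h1 (mul_nonneg (by linarith : (0:ℝ) ≤ s) hes.le),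
      mul_nonneg hes.le (mul_nonneg (by linarith : (0:ℝ) ≤ s - 1) (by linarith : (0:ℝ) ≤ t - s))]
  rw [Real.exp_neg, Real.exp_neg, ← div_eq_mul_inv, ← div_eq_mul_inv,
    div_le_div_iff₀ het hes]
  exact key

theorem entropy_comparison (cstar : ℝ) (hcstar : 0 < cstar) (V : ℝ) (hV : 0 < V)
    (c : ℝ) (hc : 0 ≤ c) (n : ℕ) (hn1 : (n : ℝ) / V ≤ c) (hn2 : c ≤ ((n : ℝ) + 1) / V) :
    E cstar c - E cstar ((n : ℝ) / V) ≤ max 1 (1 / cstar) / V * (1 + E cstar c) ∧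
    (max (1 / cstar) (Real.exp 1 * cstar) ≤ V → Real.exp 1 ≤ V →
      E cstar ((n : ℝ) / V) - E cstar c ≤ 2 * Real.log V / V) := by
  set a := (n : ℝ) / V with hadef
  have ha0 : 0 ≤ a := div_nonneg (Nat.cast_nonneg n) hV.le
  have hca : c - a ≤ 1 / V := by
    rw [add_div] at hn2
    rw [hadef]
    linarith
  have hca0 : 0 ≤ c - a := by linarith
  have hEc := E_nonneg cstar c hcstar hc
  have hM1 : (1:ℝ) ≤ max 1 (1/cstar) := le_max_left _ _
  constructor
  · have h1 := step1 cstar hcstar a c ha0 hn1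
    rcases le_or_gt (Real.log c - Real.log cstar) 0 with hx | hx
    · have hle0 : (c - a) * (Real.log c - Real.log cstar) ≤ 0 :=
        mul_nonpos_of_nonneg_of_nonpos hca0 hx
      have hr : 0 ≤ max 1 (1/cstar) / V * (1 + E cstar c) :=
        mul_nonneg (div_nonneg (by linarith) hV.le) (by linarith)
      linarith
    · rcases eq_or_lt_of_le hc with rfl | hcpos
      · have ha' : a = 0 := le_antisymm hn1 ha0
        rw [ha', sub_self]
        exact mul_nonneg (div_nonneg (by linarith) hV.le) (by linarith)
      · have hcl := claim1 cstar hcstar c hcpos hx.le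
        calc E cstar c - E cstar a ≤ (c - a) * (Real.log c - Real.log cstar) := h1
          _ ≤ (1/V) * (Real.log c - Real.log cstar) :=
              mul_le_mul_of_nonneg_right hca hx.le
          _ ≤ (1/V) * (max 1 (1/cstar) * (1 + E cstar c)) :=
              mul_le_mul_of_nonneg_left hcl (by positivity)
          _ = max 1 (1/cstar) / V * (1 + E cstar c) := by ring
  · intro hmax hVe
    have hlogV : 1 ≤ Real.log V := (Real.le_log_iff_exp_le hV).2 hVe
    have hecV : Real.exp 1 * cstar ≤ V := le_trans (le_max_right _ _) hmax
    have hcsV : cstar ≤ V := by nlinarith [Real.add_one_le_exp 1]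
    have hlogcs : Real.log cstar + 1 ≤ Real.log V := by
      have h := Real.log_le_log (by positivity) hecV
      rw [Real.log_mul (Real.exp_ne_zero 1) hcstar.ne', Real.log_exp] at h
      linarith
    rcases Nat.eq_zero_or_pos n with rfl | hn
    · have ha' : a = 0 := by simp [hadef]
      have hE0 : E cstar 0 = cstar := by rw [E_eq cstar hcstar.ne']; simp
      rw [ha', hE0]
      rcases eq_or_lt_of_le hc with rfl | hcpos
      · rw [E_eq cstar hcstar.ne']
        have : 0 ≤ Real.log V := by linarith
        simp
        positivity
      · have hc1V : c ≤ 1/V := by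
          have he : (((0:ℕ):ℝ) + 1) / V = 1/V := by norm_num
          rw [he] at hn2
          exact hn2
        rw [E_eq cstar hcstar.ne' c]
        have t1 : -(c * Real.log c) ≤ Real.log V / V := by
          have hlogc : Real.log c ≤ -Real.log V := by
            have h := Real.log_le_log hcpos hc1V
            rwa [Real.log_div one_ne_zero hV.ne', Real.log_one, zero_sub] at h
          set t := -Real.log c with htdef
          have hct : c = Real.exp (-t) := by
            rw [htdef, neg_neg, Real.exp_log hcpos]
          have h := te_mono (Real.log V) t hlogV (by linarith)
          have he1 : Real.exp (-Real.log V) = V⁻¹ := by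
            rw [Real.exp_neg, Real.exp_log hV]
          have h2 : -(c * Real.log c) = t * Real.exp (-t) := by
            rw [← hct, htdef]; ring
          rw [h2, div_eq_mul_inv]
          calc t * Real.exp (-t) ≤ Real.log V * Real.exp (-Real.log V) := h
            _ = Real.log V * V⁻¹ := by rw [he1]
        have t2 : c * Real.log cstar + c ≤ Real.log V / V := by
          rcases le_or_gt (Real.log cstar + 1) 0 with h' | h'
          · have h1 : c * (Real.log cstar + 1) ≤ 0 :=
              mul_nonpos_of_nonneg_of_nonpos hcpos.le h'
            have h2 : (0:ℝ) ≤ Real.log V / V := by positivity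
            nlinarith
          · have h1 : c * (Real.log cstar + 1) ≤ (1/V) * (Real.log cstar + 1) :=
              mul_le_mul_of_nonneg_right hc1V h'.le
            have h2 : (1/V) * (Real.log cstar + 1) ≤ (1/V) * Real.log V :=
              mul_le_mul_of_nonneg_left (by linarith) (by positivity)
            have h3 : (1/V) * Real.log V = Real.log V / V := by ring
            nlinarith
        have h4 : 2 * Real.log V / V = Real.log V / V + Real.log V / V := by ring
        linarith
    · have h1n : (1:ℝ) ≤ (n:ℝ) := by exact_mod_cast hn
      have haV : 1/V ≤ a := by
        rw [hadef]
        gcongr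
      have ha0' : 0 < a := lt_of_lt_of_le (by positivity) haV
      have h2 := step1' cstar hcstar a c ha0' hn1
      rcases le_or_gt (Real.log cstar - Real.log a) 0 with hx | hx
      · have hle0 : (c - a) * (Real.log cstar - Real.log a) ≤ 0 :=
          mul_nonpos_of_nonneg_of_nonpos hca0 hx
        have hr : (0:ℝ) ≤ 2 * Real.log V / V := by
          have : (0:ℝ) ≤ Real.log V := by linarith
          positivity
        linarith
      · have hla : -Real.log a ≤ Real.log V := by
          have h := Real.log_le_log (by positivity : (0:ℝ) < 1/V) haV
          rw [Real.log_div one_ne_zero hV.ne', Real.log_one, zero_sub] at h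
          linarith
        have hlcs : Real.log cstar ≤ Real.log V := Real.log_le_log hcstar hcsV
        calc E cstar a - E cstar c ≤ (c - a) * (Real.log cstar - Real.log a) := h2
          _ ≤ (1/V) * (Real.log cstar - Real.log a) :=
              mul_le_mul_of_nonneg_right hca hx.le
          _ ≤ (1/V) * (2 * Real.log V) :=
              mul_le_mul_of_nonneg_left (by linarith) (by positivity)
          _ = 2 * Real.log V / V := by ring
end
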